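/- For every real λ > 1 and every q ∈ (0,1/2), the point p*_λ(q) = 1/(1+((1-q)/q)^{λ/(λ-1)}) satisfies 0 < p*_λ(q) < q, and for every p ∈ [0,1/2] one has λ·KL(p‖q) + H(p) ≥ λ·KL(p*_λ(q)‖q) + H(p*_λ(q)); consequently Q_λ(q) = U_λ(q). -/

import Mathlib

open MeasureTheory Filter

noncomputable def binEnt (p : ℝ) : ℝ :=
  -(p * Real.logb 2 p) - (1 - p) * Real.logb 2 (1 - p)

noncomputable def klBin (a b : ℝ) : ℝ :=
  a * Real.logb 2 (a / b) + (1 - a) * Real.logb 2 ((1 - a) / (1 - b))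

noncomputable def pstar (lam q : ℝ) : ℝ := 1 / (1 + ((1 - q) / q) ^ (lam / (lam - 1)))

noncomputable def Ulam (lam q : ℝ) : ℝ :=
  lam * klBin (pstar lam q) q + binEnt (pstar lam q)

lemma mul_logb_div' (p b : ℝ) (hp : 0 ≤ p) (hb : 0 < b) :
    p * Real.logb 2 (p / b) = p * Real.logb 2 p - p * Real.logb 2 b := by
  rcases eq_or_lt_of_le hp with h | h
  · simp [← h]
  · rw [Real.logb_div h.ne' hb.ne']; ring

lemma klBin_nonneg' (p b : ℝ) (hp0 : 0 ≤ p) (hp1 : p < 1) (hb0 : 0 < b) (hb1 : b < 1) :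
    0 ≤ klBin p b := by
  have h1p : 0 < 1 - p := by linarith
  have h1b : 0 < 1 - b := by linarith
  have hlog2 : (0:ℝ) < Real.log 2 := Real.log_pos (by norm_num)
  have hexp : klBin p b
      = (p * Real.log (p / b) + (1 - p) * Real.log ((1 - p) / (1 - b))) / Real.log 2 := by
    simp only [klBin, Real.logb]; ring
  rw [hexp]
  apply div_nonneg _ hlog2.le
  have h2 : (1 - p) - (1 - b) ≤ (1 - p) * Real.log ((1 - p) / (1 - b)) := by
    have h := mul_le_mul_of_nonneg_left
      (Real.log_le_sub_one_of_pos (show (0:ℝ) < (1 - b) / (1 - p) by positivity)) h1p.le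
    have hf : (1 - p) * ((1 - b) / (1 - p) - 1) = (1 - b) - (1 - p) := by field_simp
    have hlog : Real.log ((1 - p) / (1 - b)) = -Real.log ((1 - b) / (1 - p)) := by
      rw [← Real.log_inv]; congr 1; field_simp
    rw [hlog]; linarith
  rcases eq_or_lt_of_le hp0 with h | h
  · subst h
    have hle : Real.log (1 - b) ≤ 0 := Real.log_nonpos h1b.le (by linarith)
    simp only [zero_mul, zero_add, sub_zero, one_mul]
    rw [one_div, Real.log_inv]; linarith
  · have h1 : p - b ≤ p * Real.log (p / b) := by
      have hh := mul_le_mul_of_nonneg_left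
        (Real.log_le_sub_one_of_pos (show (0:ℝ) < b / p by positivity)) h.le
      have hf : p * (b / p - 1) = b - p := by field_simp
      have hlog : Real.log (p / b) = -Real.log (b / p) := by
        rw [← Real.log_inv]; congr 1; field_simp
      rw [hlog]; linarith
    linarith

theorem Qlam_eq_Ulam_of_large_lambda
    (lam : ℝ) (hlam : 1 < lam) (q : ℝ) (hq0 : 0 < q) (hq : q < 1 / 2) :
    0 < pstar lam q ∧ pstar lam q < q ∧
    (∀ p ∈ Set.Icc (0 : ℝ) (1 / 2),
      lam * klBin (pstar lam q) q + binEnt (pstar lam q) ≤ lam * klBin p q + binEnt p) ∧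
    sInf ((fun p => lam * klBin p q + binEnt p) '' Set.Icc 0 (1 / 2)) = Ulam lam q := by
  have hlam1 : (0:ℝ) < lam - 1 := by linarith
  have h1q : (0:ℝ) < 1 - q := by linarith
  have hb0 : (0:ℝ) < (1 - q) / q := by positivity
  have hb1 : (1:ℝ) < (1 - q) / q := by
    rw [lt_div_iff₀ hq0]; linarith
  set t : ℝ := lam / (lam - 1) with ht
  have ht1 : (1:ℝ) < t := by
    rw [ht, lt_div_iff₀ hlam1]; linarith
  set x : ℝ := ((1 - q) / q) ^ t with hxdef
  have hx : (0:ℝ) < x := Real.rpow_pos_of_pos hb0 t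
  have h1px : (0:ℝ) < 1 + x := by linarith
  set a : ℝ := pstar lam q with hadef
  have ha : a = 1 / (1 + x) := rfl
  have ha0 : 0 < a := by rw [ha]; positivity
  have h1a : 1 - a = x / (1 + x) := by rw [ha]; field_simp; ring
  have h1a0 : 0 < 1 - a := by rw [h1a]; positivity
  -- a < q
  have hxb : (1 - q) / q < x := by
    calc (1 - q) / q = ((1 - q) / q) ^ (1:ℝ) := (Real.rpow_one _).symm
    _ < x := Real.rpow_lt_rpow_of_exponent_lt hb1 ht1
  have haq : a < q := by
    rw [ha, div_lt_iff₀ h1px]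
    have hqq : q * ((1 - q) / q) = 1 - q := by field_simp
    nlinarith [mul_lt_mul_of_pos_left hxb hq0]
  have ha1 : a < 1 := by linarith
  -- stationarity
  have hstat : (lam - 1) * (Real.logb 2 a - Real.logb 2 (1 - a))
      = lam * (Real.logb 2 q - Real.logb 2 (1 - q)) := by
    have h1 : Real.logb 2 a - Real.logb 2 (1 - a) = Real.logb 2 (a / (1 - a)) :=
      (Real.logb_div ha0.ne' h1a0.ne').symm
    have h2 : a / (1 - a) = x⁻¹ := by
      rw [h1a, ha]; field_simp
    have h3 : Real.logb 2 x = t * (Real.logb 2 (1 - q) - Real.logb 2 q) := by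
      rw [hxdef, ← Real.logb_div h1q.ne' hq0.ne']
      simp only [Real.logb, Real.log_rpow hb0]; ring
    rw [h1, h2, Real.logb_inv, h3]
    have hlt : (lam - 1) * t = lam := by
      rw [ht]; field_simp
    linear_combination (-(Real.logb 2 (1 - q) - Real.logb 2 q)) * hlt
  -- key identity
  have key : ∀ p : ℝ, 0 ≤ p → p < 1 →
      lam * klBin p q + binEnt p
        = (lam - 1) * klBin p a
          + ((lam - 1) * Real.logb 2 (1 - a) - lam * Real.logb 2 (1 - q)) := by
    intro p hp0 hp1
    have h1p : (0:ℝ) ≤ 1 - p := by linarith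
    simp only [klBin, binEnt,
      mul_logb_div' p q hp0 hq0, mul_logb_div' (1 - p) (1 - q) h1p h1q,
      mul_logb_div' p a hp0 ha0, mul_logb_div' (1 - p) (1 - a) h1p h1a0]
    linear_combination p * hstat
  have hklaa : klBin a a = 0 := by
    simp [klBin, div_self ha0.ne', div_self h1a0.ne']
  have hfa : lam * klBin a q + binEnt a
      = (lam - 1) * Real.logb 2 (1 - a) - lam * Real.logb 2 (1 - q) := by
    have := key a ha0.le ha1
    rw [hklaa] at this; linarith
  have hmin : ∀ p ∈ Set.Icc (0 : ℝ) (1 / 2),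
      lam * klBin a q + binEnt a ≤ lam * klBin p q + binEnt p := by
    intro p hp
    obtain ⟨hp0, hp2⟩ := hp
    have hp1 : p < 1 := by linarith
    have hkl : 0 ≤ klBin p a := klBin_nonneg' p a hp0 hp1 ha0 ha1
    rw [key p hp0 hp1, hfa]
    nlinarith [hkl]
  refine ⟨ha0, haq, hmin, ?_⟩
  have hamem : a ∈ Set.Icc (0:ℝ) (1/2) := ⟨ha0.le, by linarith⟩
  have hmem : lam * klBin a q + binEnt a
      ∈ (fun p => lam * klBin p q + binEnt p) '' Set.Icc 0 (1 / 2) := ⟨a, hamem, rfl⟩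
  have hlb : ∀ y ∈ (fun p => lam * klBin p q + binEnt p) '' Set.Icc (0:ℝ) (1 / 2),
      lam * klBin a q + binEnt a ≤ y := by
    rintro y ⟨p, hp, rfl⟩; exact hmin p hp
  have : sInf ((fun p => lam * klBin p q + binEnt p) '' Set.Icc (0:ℝ) (1 / 2))
      = lam * klBin a q + binEnt a :=
    le_antisymm (csInf_le ⟨_, hlb⟩ hmem) (le_csInf ⟨_, hmem⟩ hlb)
  rw [this]; rfl
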